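/- Let t₀ ∈ ℝ, T_p > 0, r a positive integer, 𝒯(t) = (T_p/(T_p + t₀ − t))^r on [t₀, t₀ + T_p), ρ₀ > 0, and ρ = ρ₀ + r/T_p. Suppose x : [t₀, t₀ + T_p) → ℝ is differentiable with ẋ(t) = −ρ 𝒯(t) x(t), and define the transformed variable h(t) = 𝒯(t) x(t) and V(t) = (1/2) h(t)². Then V is differentiable and V′(t) ≤ −2ρ₀ 𝒯(t) V(t) for all t ∈ [t₀, t₀ + T_p). -/

import Mathlib

/-- The time-scaling function `𝒯(t) = (T_p / (T_p + t₀ - t))^r`. -/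
noncomputable def Tscale (t₀ Tp : ℝ) (r : ℕ) (t : ℝ) : ℝ := (Tp / (Tp + t₀ - t)) ^ r

/-- with the gain `ρ = ρ₀ + r/T_p`, the transformed Lyapunov
function `V(t) = ½(𝒯(t)x(t))²` satisfies `V'(t) ≤ -2ρ₀ 𝒯(t) V(t)`. -/
theorem single_integrator_lyapunov_inequality
    (t₀ Tp : ℝ) (hTp : 0 < Tp) (r : ℕ) (hr : 0 < r)
    (ρ₀ ρ : ℝ) (hρ₀ : 0 < ρ₀) (hρ : ρ = ρ₀ + (r : ℝ) / Tp)
    (x : ℝ → ℝ)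
    (hx : ∀ t ∈ Set.Ico t₀ (t₀ + Tp),
      HasDerivAt x (-(ρ * Tscale t₀ Tp r t) * x t) t) :
    ∀ t ∈ Set.Ico t₀ (t₀ + Tp),
      DifferentiableAt ℝ (fun s => (1 / 2) * (Tscale t₀ Tp r s * x s) ^ 2) t ∧
      deriv (fun s => (1 / 2) * (Tscale t₀ Tp r s * x s) ^ 2) t
        ≤ -2 * ρ₀ * Tscale t₀ Tp r t
            * ((1 / 2) * (Tscale t₀ Tp r t * x t) ^ 2) := by
  intro t ht
  obtain ⟨ht₀, ht₁⟩ := ht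
  set u : ℝ := Tp + t₀ - t with hu_def
  have hu : 0 < u := by simp [hu_def]; linarith
  have huTp : u ≤ Tp := by simp [hu_def]; linarith
  -- derivative of the inner function
  have hg : HasDerivAt (fun s => Tp + t₀ - s) (-1) t := by
    simpa using (hasDerivAt_id t).const_sub (Tp + t₀)
  have hdiv : HasDerivAt (fun s => Tp / (Tp + t₀ - s))
      ((0 * u - Tp * (-1)) / u ^ 2) t :=
    (hasDerivAt_const t Tp).div hg (ne_of_gt hu)
  have hT : HasDerivAt (Tscale t₀ Tp r)
      ((r : ℝ) * (Tp / u) ^ (r - 1) * ((0 * u - Tp * (-1)) / u ^ 2)) t := by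
    simpa [← hu_def] using (show HasDerivAt (Tscale t₀ Tp r) _ t from hdiv.fun_pow r)
  -- simplify the derivative of Tscale
  have hTval : Tscale t₀ Tp r t = (Tp / u) ^ r := by simp [Tscale, hu_def]
  have hTderiv : (r : ℝ) * (Tp / u) ^ (r - 1) * ((0 * u - Tp * (-1)) / u ^ 2)
      = (r / u) * Tscale t₀ Tp r t := by
    rw [hTval]
    have : (Tp / u) ^ r = (Tp / u) ^ (r - 1) * (Tp / u) := by
      rw [← pow_succ]
      congr 1
      omega
    rw [this]
    field_simp
    ring
  rw [hTderiv] at hT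
  -- derivative of h = Tscale * x
  have hx' := hx t ⟨ht₀, ht₁⟩
  have hh : HasDerivAt (fun s => Tscale t₀ Tp r s * x s)
      ((r / u) * Tscale t₀ Tp r t * x t
        + Tscale t₀ Tp r t * (-(ρ * Tscale t₀ Tp r t) * x t)) t := hT.mul hx'
  have hV : HasDerivAt (fun s => (1 / 2) * (Tscale t₀ Tp r s * x s) ^ 2)
      ((1 / 2) * ((2 : ℕ) * (Tscale t₀ Tp r t * x t) ^ 1
        * ((r / u) * Tscale t₀ Tp r t * x t
          + Tscale t₀ Tp r t * (-(ρ * Tscale t₀ Tp r t) * x t)))) t :=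
    (hh.pow 2).const_mul (1 / 2)
  refine ⟨hV.differentiableAt, ?_⟩
  rw [hV.deriv]
  -- the inequality
  have hTpos : 0 < Tscale t₀ Tp r t := by
    rw [hTval]; positivity
  have hquot : (1 : ℝ) ≤ Tp / u := (one_le_div hu).mpr huTp
  have hTge : Tp / u ≤ Tscale t₀ Tp r t := by
    rw [hTval]
    calc Tp / u = (Tp / u) ^ 1 := (pow_one _).symm
    _ ≤ (Tp / u) ^ r := pow_le_pow_right₀ hquot hr
  have key : (r : ℝ) / u ≤ (r / Tp) * Tscale t₀ Tp r t := by
    have h1 : (r : ℝ) / Tp * (Tp / u) ≤ (r : ℝ) / Tp * Tscale t₀ Tp r t := by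
      apply mul_le_mul_of_nonneg_left hTge
      positivity
    have h2 : (r : ℝ) / Tp * (Tp / u) = (r : ℝ) / u := by
      field_simp
    linarith
  have hsq : 0 ≤ (Tscale t₀ Tp r t * x t) ^ 2 := sq_nonneg _
  have hρval : ρ - ρ₀ = (r : ℝ) / Tp := by rw [hρ]; ring
  -- rewrite both sides
  have lhs_eq : (1 / 2) * ((2 : ℕ) * (Tscale t₀ Tp r t * x t) ^ 1
        * ((r / u) * Tscale t₀ Tp r t * x t
          + Tscale t₀ Tp r t * (-(ρ * Tscale t₀ Tp r t) * x t)))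
      = (Tscale t₀ Tp r t * x t) ^ 2 * ((r / u) - ρ * Tscale t₀ Tp r t) := by
    push_cast
    ring
  have rhs_eq : -2 * ρ₀ * Tscale t₀ Tp r t * ((1 / 2) * (Tscale t₀ Tp r t * x t) ^ 2)
      = (Tscale t₀ Tp r t * x t) ^ 2 * (-(ρ₀ * Tscale t₀ Tp r t)) := by ring
  rw [lhs_eq, rhs_eq]
  apply mul_le_mul_of_nonneg_left _ hsq
  have : (r : ℝ) / u ≤ (ρ - ρ₀) * Tscale t₀ Tp r t := by rw [hρval]; exact key
  nlinarith
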